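/- Let a, b be positive integers with a dividing b. Then there is a group isomorphism H_{a,b} ≅ ((U(1) × SU(3))/Z₃) × SU(2) × ℤ_a. -/

import Mathlib

/-- `SU(n)`: the special unitary group of `n × n` complex matrices, as a group. -/
noncomputable instance SUn.instGroup (n : Type*) [DecidableEq n] [Fintype n] :
    Group (Matrix.specialUnitaryGroup n ℂ) :=
  { (inferInstance : Monoid (Matrix.specialUnitaryGroup n ℂ)) with
    inv := fun A => ⟨star A.1, by
      obtain ⟨h1, h2⟩ := Matrix.mem_specialUnitaryGroup_iff.mp A.2
      refine Matrix.mem_specialUnitaryGroup_iff.mpr ⟨Unitary.star_mem h1, ?_⟩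
      rw [Matrix.star_eq_conjTranspose, Matrix.det_conjTranspose, h2, star_one]⟩
    inv_mul_cancel := fun A =>
      Subtype.ext ((Matrix.mem_specialUnitaryGroup_iff.mp A.2).1.1) }

noncomputable abbrev SU2 : Type := Matrix.specialUnitaryGroup (Fin 2) ℂ
noncomputable abbrev SU3 : Type := Matrix.specialUnitaryGroup (Fin 3) ℂ
noncomputable abbrev U3 : Type := Matrix.unitaryGroup (Fin 3) ℂ

/-- The subgroup `H_{a,b} = {(λ, q, m) ∈ U(1) × SU(2) × U(3) : λ^a (det m)^b = 1}`,
realized as the kernel of `(λ, q, m) ↦ λ^a (det m)^b`. -/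
noncomputable def detPow (a b : ℕ) : Circle × SU2 × U3 →* ℂ where
  toFun x := (x.1 : ℂ) ^ a * ((x.2.2 : Matrix (Fin 3) (Fin 3) ℂ).det) ^ b
  map_one' := by simp
  map_mul' x y := by
    simp only [Prod.fst_mul, Prod.snd_mul, Circle.coe_mul, Submonoid.coe_mul,
      Matrix.det_mul, mul_pow]
    ring

noncomputable def Hab (a b : ℕ) : Subgroup (Circle × SU2 × U3) := (detPow a b).ker

/-- The central subgroup `Z₃ = {(ζ, ζ⁻¹·1₃) : ζ ∈ U(1), ζ³ = 1}` of `U(1) × SU(3)`. -/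
noncomputable def Z3 : Subgroup (Circle × SU3) where
  carrier := {p | ∃ ζ : Circle, ζ ^ 3 = 1 ∧ p.1 = ζ ∧
    (p.2 : Matrix (Fin 3) (Fin 3) ℂ) =
      ((ζ⁻¹ : Circle) : ℂ) • (1 : Matrix (Fin 3) (Fin 3) ℂ)}
  one_mem' := ⟨1, by simp, rfl, by simp⟩
  mul_mem' := by
    rintro p q ⟨ζ, hζ, h1, h2⟩ ⟨ξ, hξ, h1', h2'⟩
    refine ⟨ζ * ξ, by rw [mul_pow, hζ, hξ, one_mul],
      by simp only [Prod.fst_mul, h1, h1'], ?_⟩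
    show (p.2 : Matrix (Fin 3) (Fin 3) ℂ) * (q.2 : Matrix (Fin 3) (Fin 3) ℂ) =
      (((ζ * ξ)⁻¹ : Circle) : ℂ) • (1 : Matrix (Fin 3) (Fin 3) ℂ)
    rw [h2, h2', smul_mul_smul_comm, one_mul, mul_inv, Circle.coe_mul]
  inv_mem' := by
    rintro p ⟨ζ, hζ, h1, h2⟩
    refine ⟨ζ⁻¹, by rw [inv_pow, hζ, inv_one], by simp [Prod.fst_inv, h1], ?_⟩
    show star (p.2 : Matrix (Fin 3) (Fin 3) ℂ) =
      ((ζ⁻¹⁻¹ : Circle) : ℂ) • (1 : Matrix (Fin 3) (Fin 3) ℂ)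
    rw [h2, star_smul, star_one, inv_inv]
    congr 1
    rw [Complex.star_def, ← Circle.coe_inv_eq_conj, inv_inv]

/-- `Z₃` consists of scalar matrices, hence is a normal subgroup. -/
noncomputable instance Z3.instNormal : Z3.Normal := by
  constructor
  rintro n ⟨ζ, hζ, h1, h2⟩ g
  refine ⟨ζ, hζ, ?_, ?_⟩
  · show g.1 * n.1 * g.1⁻¹ = ζ
    rw [h1, mul_comm g.1 ζ, mul_assoc, mul_inv_cancel, mul_one]
  · show (g.2 : Matrix (Fin 3) (Fin 3) ℂ) * (n.2 : Matrix (Fin 3) (Fin 3) ℂ) *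
        star (g.2 : Matrix (Fin 3) (Fin 3) ℂ) =
      ((ζ⁻¹ : Circle) : ℂ) • (1 : Matrix (Fin 3) (Fin 3) ℂ)
    rw [h2, mul_smul_comm, mul_one, smul_mul_assoc,
      (Matrix.mem_specialUnitaryGroup_iff.mp g.2.2).1.2]

open Complex in
/-- det as a map to the circle. -/
noncomputable def uDet : U3 →* Circle where
  toFun m := ⟨(m : Matrix (Fin 3) (Fin 3) ℂ).det, mem_sphere_zero_iff_norm.2 <| by
    have h := Matrix.mem_unitaryGroup_iff'.mp m.2
    have hd : star (m : Matrix (Fin 3) (Fin 3) ℂ).det * (m : Matrix (Fin 3) (Fin 3) ℂ).det = 1 := by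
      rw [← Matrix.det_conjTranspose, ← Matrix.det_mul, ← Matrix.star_eq_conjTranspose, h,
        Matrix.det_one]
    have h2 : ‖(m : Matrix (Fin 3) (Fin 3) ℂ).det‖ ^ 2 = 1 := by
      have := congrArg norm hd
      rwa [norm_mul, norm_one, Complex.star_def,
        Complex.norm_conj ((m : Matrix (Fin 3) (Fin 3) ℂ).det), ← sq] at this
    nlinarith [norm_nonneg (m : Matrix (Fin 3) (Fin 3) ℂ).det]⟩
  map_one' := Circle.ext <| by simp
  map_mul' x y := Circle.ext <| by
    simp [Submonoid.coe_mul, Matrix.det_mul]; rfl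

@[simp] lemma uDet_coe (m : U3) : (uDet m : ℂ) = (m : Matrix (Fin 3) (Fin 3) ℂ).det := rfl

lemma smul_mem_unitaryGroup (z : Circle) {M : Matrix (Fin 3) (Fin 3) ℂ}
    (hM : M ∈ Matrix.unitaryGroup (Fin 3) ℂ) :
    (z : ℂ) • M ∈ Matrix.unitaryGroup (Fin 3) ℂ := by
  rw [Matrix.mem_unitaryGroup_iff] at hM ⊢
  have hz : (z : ℂ) * star (z : ℂ) = 1 := by
    rw [Complex.star_def, ← Circle.coe_inv_eq_conj, ← Circle.coe_mul, mul_inv_cancel,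
      Circle.coe_one]
  rw [star_smul, smul_mul_smul_comm, hM, hz, one_smul]

/-- `(λ, s) ↦ λ • s` from `U(1) × SU(3)` onto `U(3)`. -/
noncomputable def phi3 : Circle × SU3 →* U3 where
  toFun p := ⟨(p.1 : ℂ) • (p.2 : Matrix (Fin 3) (Fin 3) ℂ),
    smul_mem_unitaryGroup p.1 (Matrix.mem_specialUnitaryGroup_iff.mp p.2.2).1⟩
  map_one' := Subtype.ext <| by simp
  map_mul' p q := Subtype.ext <| by
    show ((p.1 * q.1 : Circle) : ℂ) • ((p.2 : Matrix (Fin 3) (Fin 3) ℂ) * q.2) =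
      ((p.1 : ℂ) • (p.2 : Matrix (Fin 3) (Fin 3) ℂ)) * ((q.1 : ℂ) • (q.2 : Matrix (Fin 3) (Fin 3) ℂ))
    rw [Circle.coe_mul, smul_mul_smul_comm]

lemma phi3_surjective : Function.Surjective phi3 := by
  intro m
  obtain ⟨z, hz⟩ := IsAlgClosed.exists_pow_nat_eq ((uDet m : ℂ)) (n := 3) (by norm_num)
  have hzabs : ‖z‖ = 1 := by
    have h1 : ‖z‖ ^ 3 = 1 := by
      rw [← norm_pow, hz, Circle.norm_coe]
    nlinarith [norm_nonneg z, sq_nonneg ‖z‖]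
  set lam : Circle := ⟨z, mem_sphere_zero_iff_norm.2 (by exact hzabs)⟩ with hlam
  have hmem : ((lam⁻¹ : Circle) : ℂ) • (m : Matrix (Fin 3) (Fin 3) ℂ) ∈
      Matrix.specialUnitaryGroup (Fin 3) ℂ := by
    refine Matrix.mem_specialUnitaryGroup_iff.mpr ⟨smul_mem_unitaryGroup _ m.2, ?_⟩
    rw [Matrix.det_smul, Fintype.card_fin]
    have : ((lam⁻¹ : Circle) : ℂ) ^ 3 = ((uDet m : ℂ))⁻¹ := by
      rw [Circle.coe_inv, inv_pow, hlam]
      norm_num [hz]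
    rw [this, ← uDet_coe, inv_mul_cancel₀ (by
      intro h
      rw [h] at hz
      simp [pow_eq_zero_iff] at hz
      rw [hz] at hzabs
      simp at hzabs)]
  refine ⟨(lam, ⟨_, hmem⟩), Subtype.ext ?_⟩
  show (lam : ℂ) • (((lam⁻¹ : Circle) : ℂ) • (m : Matrix (Fin 3) (Fin 3) ℂ)) = m
  rw [smul_smul, ← Circle.coe_mul, mul_inv_cancel, Circle.coe_one, one_smul]

lemma phi3_ker : phi3.ker = Z3 := by
  ext p
  constructor
  · intro hp
    have hp' : (p.1 : ℂ) • (p.2 : Matrix (Fin 3) (Fin 3) ℂ) = 1 := congrArg Subtype.val hp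
    have hdet : ((p.1 : ℂ)) ^ 3 = 1 := by
      have := congrArg Matrix.det hp'
      rwa [Matrix.det_smul, Fintype.card_fin,
        (Matrix.mem_specialUnitaryGroup_iff.mp p.2.2).2, mul_one, Matrix.det_one] at this
    refine ⟨p.1, Circle.ext (by push_cast; exact hdet), rfl, ?_⟩
    have := congrArg (fun M => ((p.1⁻¹ : Circle) : ℂ) • M) hp'
    simpa [smul_smul, ← Circle.coe_mul] using this
    
  · rintro ⟨ζ, hζ, h1, h2⟩
    refine Subtype.ext ?_
    show (p.1 : ℂ) • (p.2 : Matrix (Fin 3) (Fin 3) ℂ) = 1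
    rw [h2, h1, smul_smul, ← Circle.coe_mul, mul_inv_cancel, Circle.coe_one, one_smul]

@[simp, norm_cast] lemma circle_coe_pow (z : Circle) (n : ℕ) :
    ((z ^ n : Circle) : ℂ) = (z : ℂ) ^ n := map_pow Circle.coeHom z n

@[simp, norm_cast] lemma circle_coe_zpow (z : Circle) (n : ℤ) :
    ((z ^ n : Circle) : ℂ) = (z : ℂ) ^ n := map_zpow Circle.coeHom z n

/-- The subgroup of `a`-th roots of unity in the circle. -/
noncomputable def Ka (a : ℕ) : Subgroup Circle := (powMonoidHom a : Circle →* Circle).ker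

lemma mem_Ka {a : ℕ} {z : Circle} : z ∈ Ka a ↔ z ^ a = 1 := MonoidHom.mem_ker

lemma mem_Hab {a b : ℕ} {x : Circle × SU2 × U3} :
    x ∈ Hab a b ↔ (x.1 : ℂ) ^ a * ((x.2.2 : Matrix (Fin 3) (Fin 3) ℂ).det) ^ b = 1 :=
  MonoidHom.mem_ker

/-- Splitting of `H_{a,ac}` as `U(3) × SU(2) × μ_a`. -/
noncomputable def splitHab (a c : ℕ) : Hab a (a * c) ≃* U3 × SU2 × Ka a where
  toFun x := (x.1.2.2, x.1.2.1, ⟨x.1.1 * (uDet x.1.2.2) ^ c, mem_Ka.mpr <| Circle.ext <| by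
    have hx := mem_Hab.mp x.2
    push_cast
    rw [mul_pow, ← pow_mul, mul_comm c a]
    simpa using hx⟩)
  invFun y := ⟨((uDet y.1)⁻¹ ^ c * y.2.2.1, y.2.1, y.1), mem_Hab.mpr <| by
    have hy := mem_Ka.mp y.2.2.2
    have hy' : ((y.2.2.1 : Circle) : ℂ) ^ a = 1 := by
      rw [← circle_coe_pow, hy, Circle.coe_one]
    push_cast
    rw [mul_pow, ← pow_mul, mul_comm c a, hy']
    have hd : ((y.1 : Matrix (Fin 3) (Fin 3) ℂ)).det ≠ 0 := by
      rw [← uDet_coe]; exact Circle.coe_ne_zero _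
    rw [uDet_coe]
    field_simp
    rw [div_pow, one_pow, one_div_mul_cancel (pow_ne_zero _ hd)]⟩
  left_inv x := by
    refine Subtype.ext (Prod.ext ?_ rfl)
    show (uDet x.1.2.2)⁻¹ ^ c * (x.1.1 * (uDet x.1.2.2) ^ c) = x.1.1
    rw [inv_pow, mul_comm (x : Circle × SU2 × U3).1, inv_mul_cancel_left]
  right_inv y := by
    refine Prod.ext rfl (Prod.ext rfl (Subtype.ext ?_))
    show (uDet y.1)⁻¹ ^ c * y.2.2.1 * (uDet y.1) ^ c = (y.2.2.1 : Circle)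
    rw [inv_pow, mul_comm _ (y.2.2.1 : Circle), mul_assoc, inv_mul_cancel, mul_one]
  map_mul' x y := by
    refine Prod.ext rfl (Prod.ext rfl (Subtype.ext ?_))
    show (x.1.1 * y.1.1) * (uDet (x.1.2.2 * y.1.2.2)) ^ c
        = (x.1.1 * (uDet x.1.2.2) ^ c) * (y.1.1 * (uDet y.1.2.2) ^ c)
    rw [map_mul, mul_pow, mul_mul_mul_comm]

/-- `μ_a ≅ ℤ_a` (multiplicatively). -/
noncomputable def KaEquivZMod (a : ℕ) (ha : 0 < a) : Ka a ≃* Multiplicative (ZMod a) := by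
  haveI : NeZero a := ⟨ha.ne'⟩
  set ζc : ℂ := Complex.exp (2 * Real.pi * Complex.I / a) with hζcdef
  have hζc : IsPrimitiveRoot ζc a := Complex.isPrimitiveRoot_exp a ha.ne'
  set ζ : Circle := Circle.exp (2 * Real.pi / a) with hζdef
  have hcoe : (ζ : ℂ) = ζc := by
    rw [hζdef, Circle.coe_exp, hζcdef]
    push_cast
    ring_nf
  have ζmem : ζ ∈ Ka a := by
    refine mem_Ka.mpr (Circle.ext ?_)
    push_cast [hcoe]
    exact hζc.pow_eq_one
  set ζK : Ka a := ⟨ζ, ζmem⟩ with hζK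
  have hζK1 : ζK ^ a = 1 := by
    refine Subtype.ext (Circle.ext ?_)
    push_cast [hcoe]
    change (ζ : ℂ) ^ a = 1
    rw [hcoe]
    exact hζc.pow_eq_one
  let f : ℤ →+ Additive (Ka a) :=
    AddMonoidHom.mk' (fun n => Additive.ofMul (ζK ^ n)) (fun m n => by rw [zpow_add]; rfl)
  have hf : f a = 0 := by
    show Additive.ofMul (ζK ^ (a : ℤ)) = 0
    rw [zpow_natCast, hζK1]; rfl
  let ψ : Multiplicative (ZMod a) →* Ka a :=
    AddMonoidHom.toMultiplicativeLeft (ZMod.lift a ⟨f, hf⟩)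
  have key : ∀ n : ℤ, ψ (Multiplicative.ofAdd ((n : ZMod a))) = ζK ^ n := fun n =>
    congrArg Additive.toMul (ZMod.lift_coe a ⟨f, hf⟩ n)
  have hcoeK : ∀ (n : ℤ), ((ζK ^ n : Ka a) : Circle) = ζ ^ n := fun n => by
    push_cast [hζK]; rfl
  have hinj : Function.Injective ψ := by
    rw [injective_iff_map_eq_one]
    intro x hx
    obtain ⟨k, rfl⟩ : ∃ k : ZMod a, Multiplicative.ofAdd k = x := ⟨x.toAdd, rfl⟩
    have main : ∀ n : ℤ, ζK ^ n = 1 → (a : ℤ) ∣ n := by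
      intro n hn
      have h1 : (ζ : ℂ) ^ n = 1 := by
        have := congrArg (fun w : Ka a => ((w : Circle) : ℂ)) hn
        simpa [hcoeK] using this
      rw [hcoe] at h1
      exact (hζc.zpow_eq_one_iff_dvd n).mp h1
    have hk : (((k.val : ℕ) : ℤ) : ZMod a) = k := by
      rw [Int.cast_natCast]
      exact ZMod.natCast_rightInverse k
    rw [← hk, key] at hx
    have hdvd : a ∣ k.val := Int.ofNat_dvd.mp (main _ hx)
    have hv : k.val = 0 := Nat.eq_zero_of_dvd_of_lt hdvd (ZMod.val_lt k)
    have hk0 : k = 0 := by rw [← hk, hv]; simp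
    rw [hk0]; rfl
  have hsurj : Function.Surjective ψ := by
    intro z
    have hz : ((z : Circle) : ℂ) ^ a = 1 := by
      have := mem_Ka.mp z.2
      calc ((z : Circle) : ℂ) ^ a = (((z : Circle) ^ a : Circle) : ℂ) := by push_cast; rfl
        _ = 1 := by rw [this, Circle.coe_one]
    obtain ⟨i, hia, hpow⟩ := hζc.eq_pow_of_pow_eq_one hz
    refine ⟨Multiplicative.ofAdd ((i : ℤ) : ZMod a), ?_⟩
    rw [key]
    refine Subtype.ext (Circle.ext ?_)
    rw [hcoeK]
    push_cast [hcoe]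
    exact hpow
  exact (MulEquiv.ofBijective ψ ⟨hinj, hsurj⟩).symm


/-- **The gauge group `SU(A)` of the Standard Model algebra.**
For positive integers `a ∣ b`, there is a group isomorphism
`H_{a,b} ≅ ((U(1) × SU(3))/Z₃) × SU(2) × ℤ_a`. -/
theorem Hab_mulEquiv_quotient_prod (a b : ℕ) (ha : 0 < a) (hb : 0 < b) (hab : a ∣ b) :
    Nonempty (Hab a b ≃*
      ((Circle × SU3) ⧸ Z3) × SU2 × Multiplicative (ZMod a)) := by
  obtain ⟨c, rfl⟩ := hab
  let eU : U3 ≃* (Circle × SU3) ⧸ Z3 :=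
    ((QuotientGroup.quotientMulEquivOfEq phi3_ker.symm).trans
      (QuotientGroup.quotientKerEquivOfSurjective phi3 phi3_surjective)).symm
  exact ⟨(splitHab a c).trans (eU.prodCongr ((MulEquiv.refl SU2).prodCongr (KaEquivZMod a ha)))⟩
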